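/- Let G be a finite group acting faithfully by automorphisms on an integral domain B with A = B^G, and let 𝔮 be a prime of B lying over 𝔭 = 𝔮 ∩ A such that the inertia group of 𝔮 is all of G (G acts trivially on the residue field extension, κ(𝔮) = κ(𝔭)) and the localization A_𝔭 → B_𝔮 is finite étale. Then G is trivial. (Classical fact underlying: a connected finite étale Galois cover is étale exactly when all inertia groups are trivial.) -/

import Mathlib

/-- The subring of `G`-fixed points of a ring `B` with a `G`-action by ring
automorphisms. -/
def fixedSubring (G : Type*) [Group G] (B : Type*) [CommRing B]
    [MulSemiringAction G B] : Subring B where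
  carrier := {b | ∀ g : G, g • b = b}
  one_mem' := fun g => smul_one g
  mul_mem' := fun {a b} ha hb g => by rw [smul_mul', ha g, hb g]
  zero_mem' := fun g => smul_zero g
  add_mem' := fun {a b} ha hb g => by rw [smul_add, ha g, hb g]
  neg_mem' := fun {a} ha g => by rw [smul_neg, ha g]

set_option maxHeartbeats 1000000 in
set_option synthInstance.maxHeartbeats 400000 in
/-- let a finite group `G` act faithfully on an integral domain `B`
with fixed ring `A`, and let `𝔮` be a prime of `B` over `𝔭 = 𝔮 ∩ A`.  If the
inertia group of `𝔮` is all of `G` (every `g` acts trivially modulo `𝔮`), the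
residue field extension is trivial (`κ(𝔮) = κ(𝔭)`), and `A_𝔭 → B_𝔮` is a finite
étale (flat and unramified) local homomorphism, then `G` is trivial. -/
theorem stmt18 {G B : Type*} [Group G] [Finite G] [CommRing B] [IsDomain B]
    [MulSemiringAction G B] [FaithfulSMul G B]
    (𝔮 : Ideal B) [𝔮.IsPrime]
    (hinertia : ∀ (g : G) (b : B), g • b - b ∈ 𝔮)
    (hres : ∀ b : B, ∃ a s : fixedSubring G B,
      (s : B) ∉ 𝔮 ∧ (s : B) * b - (a : B) ∈ 𝔮)
    (hfin : @Module.Finite (Localization.AtPrime (𝔮.comap (fixedSubring G B).subtype))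
      (Localization.AtPrime 𝔮) _ _
      (@Algebra.toModule _ _ _ _
        (Localization.localRingHom (𝔮.comap (fixedSubring G B).subtype) 𝔮
          (fixedSubring G B).subtype rfl).toAlgebra))
    (hflat : @Module.Flat (Localization.AtPrime (𝔮.comap (fixedSubring G B).subtype))
      (Localization.AtPrime 𝔮) _ _
      (@Algebra.toModule _ _ _ _
        (Localization.localRingHom (𝔮.comap (fixedSubring G B).subtype) 𝔮
          (fixedSubring G B).subtype rfl).toAlgebra))
    (hunr : @Algebra.FormallyUnramified (Localization.AtPrime (𝔮.comap (fixedSubring G B).subtype))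
      (Localization.AtPrime 𝔮) _ _
      ((Localization.localRingHom (𝔮.comap (fixedSubring G B).subtype) 𝔮
          (fixedSubring G B).subtype rfl).toAlgebra)) :
    ∀ g : G, g = 1 := by
  classical
  set A : Subring B := fixedSubring G B with hA
  set 𝔭 : Ideal A := 𝔮.comap A.subtype with h𝔭
  set R := Localization.AtPrime 𝔭 with hR
  set S := Localization.AtPrime 𝔮 with hS
  have hq : 𝔮.IsPrime := inferInstance
  letI : Algebra R S := (Localization.localRingHom 𝔭 𝔮 A.subtype rfl).toAlgebra
  haveI hfin' : Module.Finite R S := hfin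
  haveI hunr' : Algebra.FormallyUnramified R S := hunr
  have halg : algebraMap R S = Localization.localRingHom 𝔭 𝔮 A.subtype rfl := rfl
  haveI hloc : IsLocalHom (algebraMap R S) := by
    rw [halg]; exact Localization.isLocalHom_localRingHom 𝔭 𝔮 A.subtype rfl
  set J : Ideal S := (IsLocalRing.maximalIdeal R).map (algebraMap R S) with hJdef
  have hJle : J ≤ IsLocalRing.maximalIdeal S := by
    rw [hJdef, Ideal.map_le_iff_le_comap]
    intro x hx
    simp only [Ideal.mem_comap, IsLocalRing.mem_maximalIdeal, mem_nonunits_iff] at hx ⊢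
    exact fun hu => hx (hloc.map_nonunit x hu)
  -- Step 1: `J` is the maximal ideal of `S`, using unramifiedness.
  have hJne : J ≠ ⊤ := fun h =>
    (IsLocalRing.maximalIdeal.isMaximal S).ne_top (eq_top_iff.mpr (h ▸ hJle))
  have hJmax : J.IsMaximal := by
    set κ := R ⧸ IsLocalRing.maximalIdeal R with hκ
    letI : Field κ := Ideal.Quotient.field _
    haveI : Nontrivial (S ⧸ J) := Ideal.Quotient.nontrivial_iff.mpr hJne
    haveI : IsLocalRing (S ⧸ J) :=
      IsLocalRing.of_surjective' (Ideal.Quotient.mk J) Ideal.Quotient.mk_surjective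
    letI : Algebra κ (S ⧸ J) :=
      (Ideal.quotientMap J (algebraMap R S) Ideal.le_comap_map).toAlgebra
    haveI : IsScalarTower R κ (S ⧸ J) :=
      IsScalarTower.of_algebraMap_eq'
        (show algebraMap R (S ⧸ J) = (algebraMap κ (S ⧸ J)).comp (algebraMap R κ) from
          RingHom.ext fun x => rfl)
    haveI : Algebra.FormallyUnramified R (S ⧸ J) :=
      Algebra.FormallyUnramified.comp R S (S ⧸ J)
    haveI : Algebra.FormallyUnramified κ (S ⧸ J) :=
      Algebra.FormallyUnramified.of_restrictScalars R κ (S ⧸ J)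
    haveI : Module.Finite R (S ⧸ J) :=
      Module.Finite.of_surjective (Ideal.Quotient.mkₐ R J).toLinearMap
        (Ideal.Quotient.mkₐ_surjective R J)
    haveI : Module.Finite κ (S ⧸ J) := Module.Finite.of_restrictScalars_finite R κ (S ⧸ J)
    haveI : IsReduced (S ⧸ J) := Algebra.FormallyUnramified.isReduced_of_field κ (S ⧸ J)
    haveI : IsArtinianRing (S ⧸ J) := isArtinian_of_tower κ inferInstance
    have hnil : IsNilpotent (IsLocalRing.maximalIdeal (S ⧸ J)) := by
      rw [← IsLocalRing.jacobson_eq_maximalIdeal (⊥ : Ideal (S ⧸ J)) bot_ne_top]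
      exact IsArtinianRing.isNilpotent_jacobson_bot
    have hfield : IsField (S ⧸ J) := by
      rw [IsLocalRing.isField_iff_maximalIdeal_eq, eq_bot_iff]
      obtain ⟨n, hn⟩ := hnil
      intro x hx
      have hxn : x ^ n = 0 := by
        have hmem : x ^ n ∈ (IsLocalRing.maximalIdeal (S ⧸ J)) ^ n := Ideal.pow_mem_pow hx n
        rw [hn] at hmem
        simpa using hmem
      exact Ideal.mem_bot.mpr (IsReduced.eq_zero x ⟨n, hxn⟩)
    exact Ideal.Quotient.maximal_of_isField J hfield
  have hJ : J = IsLocalRing.maximalIdeal S := IsLocalRing.eq_maximalIdeal hJmax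
  -- Step 2: surjectivity of `A_𝔭 → B_𝔮` via Nakayama.
  have hrange : ∀ x : S,
      x ∈ LinearMap.range (Algebra.linearMap R S) ⊔
        (IsLocalRing.maximalIdeal R) • (⊤ : Submodule R S) := by
    intro x
    obtain ⟨b, tc, rfl⟩ := IsLocalization.exists_mk'_eq 𝔮.primeCompl x
    obtain ⟨a₁, s₁, hs₁, h₁⟩ := hres b
    obtain ⟨a₂, s₂, hs₂, h₂⟩ := hres (tc : B)
    have htc : (tc : B) ∉ 𝔮 := tc.2
    have ha₂ : (a₂ : B) ∉ 𝔮 := by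
      intro h
      have h3 := Ideal.add_mem 𝔮 h₂ h
      rw [sub_add_cancel] at h3
      exact (hq.mem_or_mem h3).elim hs₂ htc
    have hd : ((s₁ : B) * (a₂ : B)) ∈ 𝔮.primeCompl :=
      fun h => (hq.mem_or_mem h).elim hs₁ ha₂
    have hd' : (s₁ * a₂ : A) ∈ 𝔭.primeCompl := hd
    set d : 𝔮.primeCompl := ⟨(s₁ : B) * (a₂ : B), hd⟩ with hdd
    set r : R := IsLocalization.mk' R (a₁ * s₂ : A) (⟨s₁ * a₂, hd'⟩ : 𝔭.primeCompl) with hr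
    set X : S := IsLocalization.mk' S b tc with hX
    set Y : S := IsLocalization.mk' S ((a₁ : B) * (s₂ : B)) d with hY
    set n : B := b * ((s₁ : B) * (a₂ : B)) - ((a₁ : B) * (s₂ : B)) * (tc : B) with hn
    have hnmem : n ∈ 𝔮 := by
      have hrw : n = (a₂ : B) * ((s₁ : B) * b - (a₁ : B))
          - (a₁ : B) * ((s₂ : B) * (tc : B) - (a₂ : B)) := by rw [hn]; ring
      rw [hrw]
      exact Ideal.sub_mem _ (Ideal.mul_mem_left _ _ h₁) (Ideal.mul_mem_left _ _ h₂)
    have hfr : algebraMap R S r = Y := by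
      rw [halg, hr, Localization.localRingHom_mk']
      rfl
    have hc : ((tc : B) * ((s₁ : B) * (a₂ : B))) ∈ 𝔮.primeCompl :=
      fun h => (hq.mem_or_mem h).elim htc hd
    have e1 : algebraMap B S (tc : B) * X = algebraMap B S b :=
      IsLocalization.mk'_spec' S b tc
    have e2 : algebraMap B S ((s₁ : B) * (a₂ : B)) * Y
        = algebraMap B S ((a₁ : B) * (s₂ : B)) :=
      IsLocalization.mk'_spec' S ((a₁ : B) * (s₂ : B)) d
    have key : algebraMap B S ((tc : B) * ((s₁ : B) * (a₂ : B))) * (X - Y)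
        = algebraMap B S n := by
      have expand : algebraMap B S ((tc : B)) * algebraMap B S ((s₁ : B) * (a₂ : B)) * (X - Y)
          = algebraMap B S ((s₁ : B) * (a₂ : B)) * (algebraMap B S (tc : B) * X)
            - algebraMap B S (tc : B) * (algebraMap B S ((s₁ : B) * (a₂ : B)) * Y) := by
        ring
      rw [map_mul, expand, e1, e2, ← map_mul, ← map_mul, ← map_sub]
      exact congrArg (algebraMap B S) (by rw [hn]; ring)
    have hdiff : X - algebraMap R S r ∈ IsLocalRing.maximalIdeal S := by
      obtain ⟨v, hv⟩ := IsLocalization.map_units S (⟨_, hc⟩ : 𝔮.primeCompl)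
      have hxv : X - algebraMap R S r =
          (↑v⁻¹ : S) * (algebraMap B S ((tc : B) * ((s₁ : B) * (a₂ : B))) *
            (X - algebraMap R S r)) := by
        rw [← hv, ← mul_assoc, Units.inv_mul, one_mul]
      rw [hxv, hfr, key, ← Localization.AtPrime.map_eq_maximalIdeal]
      exact Ideal.mul_mem_left _ _ (Ideal.mem_map_of_mem _ hnmem)
    have hsplit : X = algebraMap R S r + (X - algebraMap R S r) := by ring
    rw [hsplit]
    refine Submodule.add_mem_sup ⟨r, rfl⟩ ?_
    rw [Ideal.smul_top_eq_map]
    exact (show X - algebraMap R S r ∈ J from hJ ▸ hdiff)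
  have hsurj : Function.Surjective (algebraMap R S) := by
    have htop : (⊤ : Submodule R S) ≤ LinearMap.range (Algebra.linearMap R S) :=
      Submodule.le_of_le_smul_of_le_jacobson_bot Module.Finite.fg_top
        (IsLocalRing.jacobson_eq_maximalIdeal (⊥ : Ideal R) bot_ne_top).ge
        (fun x _ => hrange x)
    intro x
    obtain ⟨r, hr⟩ := htop (Submodule.mem_top : x ∈ ⊤)
    exact ⟨r, hr⟩
  -- Step 3: conclude that every `b : B` satisfies `s * b = a` with `a`, `s` fixed, `s ∉ 𝔮`.
  intro g
  refine eq_of_smul_eq_smul (α := B) (fun b => ?_)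
  rw [one_smul]
  obtain ⟨r, hr⟩ := hsurj (algebraMap B S b)
  obtain ⟨a, s, rfl⟩ := IsLocalization.exists_mk'_eq 𝔭.primeCompl r
  have hsB : ((s : A) : B) ∉ 𝔮 := s.2
  set sq : 𝔮.primeCompl := ⟨((s : A) : B), hsB⟩ with hsq
  have hfr : algebraMap R S (IsLocalization.mk' R a s) =
      IsLocalization.mk' S ((a : A) : B) sq := by
    rw [halg, Localization.localRingHom_mk']
    rfl
  rw [hfr] at hr
  have e3 : algebraMap B S ((s : A) : B) * IsLocalization.mk' S ((a : A) : B) sq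
      = algebraMap B S ((a : A) : B) :=
    IsLocalization.mk'_spec' S ((a : A) : B) sq
  have heq : algebraMap B S (((s : A) : B) * b - (a : B)) = 0 := by
    rw [map_sub, map_mul, ← hr, e3, sub_self]
  obtain ⟨c, hc⟩ := (IsLocalization.map_eq_zero_iff (M := 𝔮.primeCompl) (S := S) _).mp heq
  have hcne : (c : B) ≠ 0 := fun h => c.2 (h ▸ 𝔮.zero_mem)
  have hsb : ((s : A) : B) * b = (a : B) := by
    rcases mul_eq_zero.mp hc with h | h
    · exact absurd h hcne
    · exact sub_eq_zero.mp h
  have hga : g • (a : B) = (a : B) := a.2 g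
  have hgs : g • ((s : A) : B) = ((s : A) : B) := (s : A).2 g
  have hcan : ((s : A) : B) * (g • b) = ((s : A) : B) * b := by
    calc ((s : A) : B) * (g • b) = (g • ((s : A) : B)) * (g • b) := by rw [hgs]
      _ = g • (((s : A) : B) * b) := (smul_mul' g _ _).symm
      _ = g • (a : B) := by rw [hsb]
      _ = (a : B) := hga
      _ = ((s : A) : B) * b := hsb.symm
  have hs0 : ((s : A) : B) ≠ 0 := fun h => hsB (h ▸ 𝔮.zero_mem)
  exact mul_left_cancel₀ hs0 hcan
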